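/- In H², the square of the area of a right hyperbolic triangle formula holds: for normalised proper points P, Q, R with (P∨Q)·(P∨R) = 0 (right angle at P), the quantity S defined by sin S = |P∨Q∨R| / (1 + |Q·R|) is well-defined, i.e. |P∨Q∨R| ≤ 1 + |Q·R|. -/
import Mathlib


/-- In `H²`, for normalised proper points `P, Q, R` with a right angle at `P`
(`(P∨Q)·(P∨R) = 0`), the right-triangle area formula
`sin S = |P∨Q∨R| / (1 + |Q·R|)` is well defined:
`|P∨Q∨R| ≤ 1 + |Q·R|`. -/
theorem stmt_13 (pw px py qw qx qy rw rx ry : ℝ)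
    (hP : pw ^ 2 - px ^ 2 - py ^ 2 = 1)
    (hQ : qw ^ 2 - qx ^ 2 - qy ^ 2 = 1)
    (hR : rw ^ 2 - rx ^ 2 - ry ^ 2 = 1)
    (hright :
      (py * qw - pw * qy) * (py * rw - pw * ry) +
        (pw * qx - px * qw) * (pw * rx - px * rw) -
        (px * qy - py * qx) * (px * ry - py * rx) = 0) :
    |pw * (qx * ry - qy * rx) - px * (qw * ry - qy * rw) +
        py * (qw * rx - qx * rw)| ≤
      1 + |qw * rw - qx * rx - qy * ry| := by
  set A := qw * rw - qx * rx - qy * ry with hA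
  set B := pw * rw - px * rx - py * ry with hB
  set C := pw * qw - px * qx - py * qy with hC
  set D := pw * (qx * ry - qy * rx) - px * (qw * ry - qy * rw) +
        py * (qw * rx - qx * rw) with hD
  have habc : A = B * C := by
    rw [hA, hB, hC]
    linear_combination (-1) * hright - (qw * rw - qx * rx - qy * ry) * hP
  have key0 : D ^ 2 =
      (pw ^ 2 - px ^ 2 - py ^ 2) *
          ((qw ^ 2 - qx ^ 2 - qy ^ 2) * (rw ^ 2 - rx ^ 2 - ry ^ 2) - A ^ 2)
        - C * (C * (rw ^ 2 - rx ^ 2 - ry ^ 2) - A * B)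
        + B * (C * A - (qw ^ 2 - qx ^ 2 - qy ^ 2) * B) := by
    rw [hD, hA, hB, hC]; ring
  rw [hP, hQ, hR] at key0
  have hD2 : D ^ 2 = 1 + A ^ 2 - B ^ 2 - C ^ 2 := by
    linear_combination key0 - 2 * A * habc
  clear_value A B C D
  clear key0 habc hP hQ hR hright hA hB hC hD
  have hfin : D ^ 2 ≤ (1 + |A|) ^ 2 := by
    nlinarith [sq_abs A, abs_nonneg A, sq_nonneg B, sq_nonneg C]
  nlinarith [sq_abs D, abs_nonneg D, abs_nonneg A, hfin]
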